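/- arXiv:2004.14941 — 2 statements merged into one kernel-verified Lean document; each statement's English description precedes it below -/
import Mathlib

section
/- In the scalar Gaussian IB with eigenvalue λ ∈ (0,1): for β > 1/(1−λ), the optimal representation satisfies I(X;T_β*) = ½ log((β−1)(1−λ)/λ) and I(T_β*;Y) = I(X;T_β*) − ½ log(β(1−λ)); in particular I(T_β*;Y) = I(X;T_β*) − ½ log(β(1−λ)) is strictly smaller than I(X;T_β*) for β(1−λ) > 1. -/
/-- Scalar Gaussian IB with eigenvalue `λ ∈ (0,1)`: for
`β > 1/(1-λ)` and the optimal representation `T_β* = aX + Z` with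
`a² = (β(1-λ)-1)/(λσ_X²)`, one has `I(X;T_β*) = ½ log((β-1)(1-λ)/λ)` and
`I(T_β*;Y) = I(X;T_β*) - ½ log(β(1-λ))`; in particular `I(T_β*;Y) < I(X;T_β*)`
when `β(1-λ) > 1`. -/
theorem stmt13 (σX lam β a : ℝ) (hσ : 0 < σX) (hlam : lam ∈ Set.Ioo (0 : ℝ) 1)
    (hβ : 1 / (1 - lam) < β) (ha : a ^ 2 = (β * (1 - lam) - 1) / (lam * σX ^ 2)) :
    (1 / 2) * Real.log (a ^ 2 * σX ^ 2 + 1)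
        = (1 / 2) * Real.log ((β - 1) * (1 - lam) / lam) ∧
    (1 / 2) * Real.log ((a ^ 2 * σX ^ 2 + 1) / (a ^ 2 * σX ^ 2 * lam + 1))
        = (1 / 2) * Real.log (a ^ 2 * σX ^ 2 + 1) - (1 / 2) * Real.log (β * (1 - lam)) ∧
    (1 < β * (1 - lam) →
      (1 / 2) * Real.log ((a ^ 2 * σX ^ 2 + 1) / (a ^ 2 * σX ^ 2 * lam + 1))
        < (1 / 2) * Real.log (a ^ 2 * σX ^ 2 + 1)) := by
  obtain ⟨hl0, hl1⟩ := hlam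
  have h1l : (0:ℝ) < 1 - lam := by linarith
  have hβl : 1 < β * (1 - lam) := by
    rw [div_lt_iff₀ h1l] at hβ; linarith
  have key : a ^ 2 * σX ^ 2 = (β * (1 - lam) - 1) / lam := by
    rw [ha]; field_simp
  have hA : a ^ 2 * σX ^ 2 + 1 = (β - 1) * (1 - lam) / lam := by
    rw [key]; field_simp; ring
  have hB : a ^ 2 * σX ^ 2 * lam + 1 = β * (1 - lam) := by
    rw [key]; field_simp; ring
  have hApos : (0:ℝ) < (β - 1) * (1 - lam) / lam := by
    apply div_pos _ hl0
    apply mul_pos _ h1l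
    nlinarith
  have hBpos : (0:ℝ) < β * (1 - lam) := by linarith
  have hlog : Real.log ((a ^ 2 * σX ^ 2 + 1) / (a ^ 2 * σX ^ 2 * lam + 1))
      = Real.log (a ^ 2 * σX ^ 2 + 1) - Real.log (a ^ 2 * σX ^ 2 * lam + 1) := by
    rw [Real.log_div (by rw [hA]; exact ne_of_gt hApos) (by rw [hB]; exact ne_of_gt hBpos)]
  refine ⟨by rw [hA], ?_, ?_⟩
  · rw [hlog, hB]; ring
  · intro hb
    rw [hlog, hB]
    have : 0 < Real.log (β * (1 - lam)) := Real.log_pos hb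
    linarith
end

section
/- The Gaussian IB curve function x ↦ F_IB(x) = x − (n/2) log(∏_{i=1}^n (1−λ_i)^{1/n} + e^{2x/n} ∏_{i=1}^n λ_i^{1/n}) (restricted to an interval of x values where the number of active eigenvalues n is constant) is concave and strictly increasing, with derivative tending to values less than 1; moreover at x = 0 (with n=1) the slope is 1 − λ₁. -/
open scoped BigOperators

/-- The Gaussian IB curve function
`F(x) = x - (n/2) log(∏ᵢ(1-λᵢ)^{1/n} + e^{2x/n} ∏ᵢ λᵢ^{1/n})` (for a fixed number `n`
of active eigenvalues `λᵢ ∈ (0,1)`) is strictly increasing and concave, with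
derivative everywhere less than `1`; moreover for `n = 1` the slope at `x = 0` is
`1 - λ₁`. -/
theorem stmt14 (n : ℕ) (hn : 0 < n) (lam : Fin n → ℝ)
    (hl : ∀ i, lam i ∈ Set.Ioo (0 : ℝ) 1) :
    let C1 : ℝ := ∏ i, (1 - lam i) ^ ((1 : ℝ) / n)
    let C2 : ℝ := ∏ i, (lam i) ^ ((1 : ℝ) / n)
    let F : ℝ → ℝ := fun x => x - ((n : ℝ) / 2) * Real.log (C1 + Real.exp (2 * x / n) * C2)
    StrictMono F ∧ ConcaveOn ℝ Set.univ F ∧ (∀ x, deriv F x < 1) ∧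
      (n = 1 → deriv F 0 = 1 - lam ⟨0, hn⟩) := by
  intro C1 C2 F
  have hnR : (0 : ℝ) < n := Nat.cast_pos.mpr hn
  have hC1 : 0 < C1 := Finset.prod_pos fun i _ =>
    Real.rpow_pos_of_pos (by linarith [(hl i).2]) _
  have hC2 : 0 < C2 := Finset.prod_pos fun i _ =>
    Real.rpow_pos_of_pos (hl i).1 _
  have hg : ∀ x : ℝ, 0 < C1 + Real.exp (2 * x / n) * C2 := fun x =>
    add_pos hC1 (mul_pos (Real.exp_pos _) hC2)
  have hF : ∀ x : ℝ, HasDerivAt F (C1 / (C1 + Real.exp (2 * x / n) * C2)) x := by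
    intro x
    have h1 : HasDerivAt (fun x : ℝ => 2 * x / n) (2 / n) x := by
      simpa using ((hasDerivAt_id x).const_mul 2).div_const (n : ℝ)
    have h2 : HasDerivAt (fun x : ℝ => C1 + Real.exp (2 * x / n) * C2)
        (2 / n * Real.exp (2 * x / n) * C2) x := by
      have := (h1.exp.mul_const C2).const_add C1
      exact this.congr_deriv (by ring)
    have h3 := h2.log (hg x).ne'
    have h4 := (hasDerivAt_id x).sub ((h3.const_mul ((n : ℝ) / 2)))
    refine h4.congr_deriv ?_
    field_simp
    ring
  have hderiv : ∀ x : ℝ, deriv F x = C1 / (C1 + Real.exp (2 * x / n) * C2) :=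
    fun x => (hF x).deriv
  have hpos : ∀ x, 0 < deriv F x := fun x => by
    rw [hderiv x]; exact div_pos hC1 (hg x)
  refine ⟨strictMono_of_deriv_pos hpos, ?_, ?_, ?_⟩
  · refine Antitone.concaveOn_univ_of_deriv (fun x => (hF x).differentiableAt) ?_
    intro x y hxy
    rw [hderiv x, hderiv y]
    have : Real.exp (2 * x / n) ≤ Real.exp (2 * y / n) := by
      apply Real.exp_le_exp.mpr
      gcongr
    exact div_le_div_of_nonneg_left hC1.le (hg x) (by nlinarith)
  · intro x
    rw [hderiv x]
    rw [div_lt_one (hg x)]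
    nlinarith [Real.exp_pos (2 * x / n), hC2]
  · intro h1
    subst h1
    have : C1 = 1 - lam ⟨0, hn⟩ := by
      simp [C1, Fin.prod_univ_one]
    have h2 : C2 = lam ⟨0, hn⟩ := by
      simp [C2, Fin.prod_univ_one]
    rw [hderiv 0]
    rw [this, h2]
    norm_num
end
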